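/- Let F, G ∈ R_+^{n×⋯×n} be nonnegative tensors with d indices, and let u, v > 0 be positive vectors with F(u) = ρ_F u^{∘(d−1)} and G(v) = ρ_G v^{∘(d−1)} for scalars ρ_F, ρ_G ≥ 0. Let α, β > 0 with α + β = 1 and set x = u^{∘α} ∘ v^{∘β} (componentwise product of powers). Then componentwise (F^{∘α} ∘ G^{∘β})(x) ≤ ρ_F^α ρ_G^β x^{∘(d−1)}, where F^{∘α} ∘ G^{∘β} denotes the tensor with entries f_{i1,…,id}^α g_{i1,…,id}^β. -/

import Mathlib

/-- Hölder/Kingman-type componentwise inequality for nonnegative tensors: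
if `F(u) = ρ_F u^{∘(d-1)}`, `G(v) = ρ_G v^{∘(d-1)}` with `u,v > 0`, and `α+β=1`,
`α,β>0`, then `(F^{∘α}∘G^{∘β})(x) ≤ ρ_F^α ρ_G^β x^{∘(d-1)}` where `x = u^{∘α}∘v^{∘β}`. -/
theorem holder_tensor_ineq
    (n d : ℕ) (hd : 2 ≤ d)
    (F G : Fin n → (Fin (d - 1) → Fin n) → ℝ)
    (hF : ∀ i m, 0 ≤ F i m) (hG : ∀ i m, 0 ≤ G i m)
    (u v : Fin n → ℝ) (hu : ∀ i, 0 < u i) (hv : ∀ i, 0 < v i)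
    (ρF ρG : ℝ) (hρF : 0 ≤ ρF) (hρG : 0 ≤ ρG)
    (heigF : ∀ i, ∑ m : Fin (d - 1) → Fin n, F i m * ∏ k, u (m k) = ρF * u i ^ (d - 1))
    (heigG : ∀ i, ∑ m : Fin (d - 1) → Fin n, G i m * ∏ k, v (m k) = ρG * v i ^ (d - 1))
    (α β : ℝ) (hα : 0 < α) (hβ : 0 < β) (hαβ : α + β = 1)
    (x : Fin n → ℝ) (hx : ∀ i, x i = u i ^ α * v i ^ β) :
    ∀ i, ∑ m : Fin (d - 1) → Fin n, (F i m) ^ α * (G i m) ^ β * ∏ k, x (m k)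
      ≤ ρF ^ α * ρG ^ β * x i ^ (d - 1) := by
  intro i
  set a : (Fin (d - 1) → Fin n) → ℝ := fun m => F i m * ∏ k, u (m k) with ha
  set b : (Fin (d - 1) → Fin n) → ℝ := fun m => G i m * ∏ k, v (m k) with hb
  have hane : ∀ m, 0 ≤ a m := fun m =>
    mul_nonneg (hF i m) (Finset.prod_nonneg fun k _ => (hu _).le)
  have hbne : ∀ m, 0 ≤ b m := fun m =>
    mul_nonneg (hG i m) (Finset.prod_nonneg fun k _ => (hv _).le)
  have hterm : ∀ m : Fin (d - 1) → Fin n,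
      (F i m) ^ α * (G i m) ^ β * ∏ k, x (m k) = a m ^ α * b m ^ β := by
    intro m
    have hprod : (∏ k, x (m k)) = (∏ k, u (m k)) ^ α * (∏ k, v (m k)) ^ β := by
      simp only [hx]
      rw [Finset.prod_mul_distrib, ← Real.finset_prod_rpow _ _ (fun k _ => (hu _).le),
        ← Real.finset_prod_rpow _ _ (fun k _ => (hv _).le)]
    rw [hprod, ha, hb]
    rw [Real.mul_rpow (hF i m) (Finset.prod_nonneg fun k _ => (hu _).le),
      Real.mul_rpow (hG i m) (Finset.prod_nonneg fun k _ => (hv _).le)]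
    ring
  have hconj : Real.HolderConjugate (1/α) (1/β) := by
    constructor
    · rw [one_div, one_div, inv_inv, inv_inv, inv_one]; exact hαβ
    · positivity
    · positivity
  have hpow : ∀ (c : ℝ) (γ : ℝ), 0 ≤ c → (c ^ γ) ^ (1/γ) = c ^ (γ * (1/γ)) :=
    fun c γ hc => (Real.rpow_mul hc γ (1/γ)).symm
  calc ∑ m : Fin (d - 1) → Fin n, (F i m) ^ α * (G i m) ^ β * ∏ k, x (m k)
      = ∑ m : Fin (d - 1) → Fin n, a m ^ α * b m ^ β :=
        Finset.sum_congr rfl fun m _ => hterm m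
    _ ≤ (∑ m : Fin (d - 1) → Fin n, (a m ^ α) ^ (1/α)) ^ (1/(1/α)) *
        (∑ m : Fin (d - 1) → Fin n, (b m ^ β) ^ (1/β)) ^ (1/(1/β)) :=
        Real.inner_le_Lp_mul_Lq_of_nonneg _ hconj
          (fun m _ => Real.rpow_nonneg (hane m) _) (fun m _ => Real.rpow_nonneg (hbne m) _)
    _ = (∑ m, a m) ^ α * (∑ m, b m) ^ β := by
        rw [one_div_one_div, one_div_one_div]
        congr 2 <;> refine Finset.sum_congr rfl fun m _ => ?_
        · rw [hpow _ _ (hane m), mul_one_div, div_self hα.ne', Real.rpow_one]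
        · rw [hpow _ _ (hbne m), mul_one_div, div_self hβ.ne', Real.rpow_one]
    _ = ρF ^ α * ρG ^ β * x i ^ (d - 1) := by
        rw [ha, hb, heigF i, heigG i,
          Real.mul_rpow hρF (pow_nonneg (hu i).le _),
          Real.mul_rpow hρG (pow_nonneg (hv i).le _)]
        have h1 : (u i ^ (d - 1)) ^ α = (u i ^ α) ^ (d - 1) := by
          rw [← Real.rpow_natCast (u i) (d - 1), ← Real.rpow_mul (hu i).le, mul_comm,
            Real.rpow_mul (hu i).le, Real.rpow_natCast]
        have h2 : (v i ^ (d - 1)) ^ β = (v i ^ β) ^ (d - 1) := by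
          rw [← Real.rpow_natCast (v i) (d - 1), ← Real.rpow_mul (hv i).le, mul_comm,
            Real.rpow_mul (hv i).le, Real.rpow_natCast]
        rw [h1, h2, hx i, mul_pow]
        ring
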